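/- arXiv:1808.00704 — 7 statements merged into one kernel-verified Lean document; each statement's English description precedes it below -/
import Mathlib

section
/- Let F, d_prev ∈ ℝⁿ with F ≠ 0, let F_prev ∈ ℝⁿ with F_prev ≠ 0, let y ∈ ℝⁿ, let t > 0, and let β = ⟨F, y⟩/‖F_prev‖² − t·(⟨F, d_prev⟩/‖F_prev‖⁴)·(⟨F, y⟩/‖F‖)². Let D be a diagonal matrix with entries 1/λ_i, 0 < ℓ ≤ λ_i ≤ u, and set d = −D F + β d_prev. If t > u/4 then ⟨F, d⟩ ≤ −(1/u − 1/(4t))·‖F‖². -/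
theorem prp_sufficient_descent (n : ℕ) (ℓ u t : ℝ) (hℓ : 0 < ℓ) (hℓu : ℓ ≤ u)
    (ht : u / 4 < t)
    (lam : Fin n → ℝ) (hlow : ∀ i, ℓ ≤ lam i) (hhigh : ∀ i, lam i ≤ u)
    (F Fp y dp DF d : EuclideanSpace ℝ (Fin n)) (hF : F ≠ 0) (hFp : Fp ≠ 0)
    (hDF : ∀ i, DF i = (lam i)⁻¹ * F i)
    (β : ℝ)
    (hβ : β = (inner ℝ (F) (y) : ℝ) / ‖Fp‖ ^ 2 -
      t * ((inner ℝ (F) (dp) : ℝ) / ‖Fp‖ ^ 4) * ((inner ℝ (F) (y) : ℝ) / ‖F‖) ^ 2)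
    (hd : d = -DF + β • dp) :
    (inner ℝ (F) (d) : ℝ) ≤ -(1 / u - 1 / (4 * t)) * ‖F‖ ^ 2 := by
  have hu : 0 < u := lt_of_lt_of_le hℓ hℓu
  have ht0 : 0 < t := lt_trans (by positivity) ht
  have hFn : (0:ℝ) < ‖F‖ := norm_pos_iff.mpr hF
  have hFpn : (0:ℝ) < ‖Fp‖ := norm_pos_iff.mpr hFp
  have hc : (0:ℝ) < ‖F‖ ^ 2 := by positivity
  have hexp : (inner ℝ F d : ℝ) = -(inner ℝ F DF : ℝ) + β * (inner ℝ F dp : ℝ) := by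
    rw [hd]
    simp [inner_add_right, inner_neg_right, inner_smul_right]
  have hDFge : (1/u) * ‖F‖ ^ 2 ≤ (inner ℝ F DF : ℝ) := by
    rw [← real_inner_self_eq_norm_sq]
    simp only [PiLp.inner_apply, RCLike.inner_apply, conj_trivial]
    rw [Finset.mul_sum]
    apply Finset.sum_le_sum
    intro i _
    rw [hDF i]
    have hli : 0 < lam i := lt_of_lt_of_le hℓ (hlow i)
    have hinv : (1:ℝ)/u ≤ (lam i)⁻¹ := by
      rw [one_div]
      exact inv_anti₀ hli (hhigh i)
    nlinarith [sq_nonneg (F i)]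
  have hβb : β * (inner ℝ F dp : ℝ) ≤ ‖F‖ ^ 2 / (4 * t) := by
    set b := (inner ℝ F dp : ℝ) with hb
    set a := (inner ℝ F y : ℝ) with ha
    set s : ℝ := b * a / ‖Fp‖ ^ 2 with hs
    have key : β * b = s - t * s ^ 2 / ‖F‖ ^ 2 := by
      rw [hβ, hs]
      field_simp
    rw [key]
    have e1 : s - t * s ^ 2 / ‖F‖ ^ 2 = (s * ‖F‖ ^ 2 - t * s ^ 2) / ‖F‖ ^ 2 := by
      field_simp
    rw [e1, div_le_div_iff₀ hc (by positivity)]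
    nlinarith [sq_nonneg (‖F‖ ^ 2 - 2 * t * s)]
  rw [hexp]
  have e2 : -(1 / u - 1 / (4 * t)) * ‖F‖ ^ 2 = -(1 / u * ‖F‖ ^ 2) + ‖F‖ ^ 2 / (4 * t) := by
    ring
  rw [e2]
  linarith
end

section
/- With the setup of the previous statement, define β₊ = max{0, β}. Then d = −D F + β₊ d_prev still satisfies ⟨F, d⟩ ≤ −c·‖F‖² with c = 1/u − 1/(4t) > 0, where in the case β₊ = 0 the stronger bound ⟨F, d⟩ ≤ −(1/u)·‖F‖² holds. -/
theorem prp_plus_sufficient_descent (n : ℕ) (ℓ u t : ℝ) (hℓ : 0 < ℓ) (hℓu : ℓ ≤ u)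
    (ht : u / 4 < t) (hu1 : 1 ≤ u)
    (lam : Fin n → ℝ) (hlow : ∀ i, ℓ ≤ lam i) (hhigh : ∀ i, lam i ≤ u)
    (F Fp y dp DF d : EuclideanSpace ℝ (Fin n)) (hF : F ≠ 0) (hFp : Fp ≠ 0)
    (hDF : ∀ i, DF i = (lam i)⁻¹ * F i)
    (β βp : ℝ)
    (hβ : β = (inner ℝ (F) (y) : ℝ) / ‖Fp‖ ^ 2 -
      t * ((inner ℝ (F) (dp) : ℝ) / ‖Fp‖ ^ 4) * ((inner ℝ (F) (y) : ℝ) / ‖F‖) ^ 2)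
    (hβp : βp = max 0 β)
    (hd : d = -DF + βp • dp) :
    (0 < 1 / u - 1 / (4 * t)) ∧
    (inner ℝ (F) (d) : ℝ) ≤ -(1 / u - 1 / (4 * t)) * ‖F‖ ^ 2 ∧
    (βp = 0 → (inner ℝ (F) (d) : ℝ) ≤ -(1 / u) * ‖F‖ ^ 2) := by
  have hu0 : (0:ℝ) < u := lt_of_lt_of_le hℓ hℓu
  have ht0 : (0:ℝ) < t := lt_of_lt_of_le (by linarith) ht.le
  have hc : 0 < 1 / u - 1 / (4 * t) := by
    rw [sub_pos, div_lt_div_iff₀ (by linarith) hu0]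
    linarith
  have hFn : (0:ℝ) < ‖F‖ := norm_pos_iff.mpr hF
  have hFn2 : (0:ℝ) < ‖F‖ ^ 2 := by positivity
  -- inner F DF ≥ (1/u) ‖F‖²
  have hFDF : (1 / u) * ‖F‖ ^ 2 ≤ (inner ℝ F DF : ℝ) := by
    have h1 : (inner ℝ F F : ℝ) = ‖F‖ ^ 2 := real_inner_self_eq_norm_sq F
    rw [← h1]
    rw [PiLp.inner_apply, PiLp.inner_apply]
    simp only [RCLike.inner_apply, conj_trivial]
    rw [Finset.mul_sum]
    apply Finset.sum_le_sum
    intro i _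
    rw [hDF i]
    have hli : 0 < lam i := lt_of_lt_of_le hℓ (hlow i)
    have : 1 / u ≤ (lam i)⁻¹ := by
      rw [one_div]
      exact inv_anti₀ hli (hhigh i)
    nlinarith [sq_nonneg (F i), sq_abs (F i)]
  -- βp * inner F dp ≤ ‖F‖² / (4t)
  set s : ℝ := (inner ℝ F dp : ℝ) with hs
  have hbd : βp * s ≤ ‖F‖ ^ 2 / (4 * t) := by
    have hbdpos : 0 ≤ ‖F‖ ^ 2 / (4 * t) := by positivity
    rcases le_or_gt s 0 with hsle | hsgt
    · have : βp * s ≤ 0 := mul_nonpos_of_nonneg_of_nonpos (hβp ▸ le_max_left 0 β) hsle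
      linarith
    · have hβs : β * s ≤ ‖F‖ ^ 2 / (4 * t) := by
        have hFpn : (0:ℝ) < ‖Fp‖ := norm_pos_iff.mpr hFp
        set a : ℝ := (inner ℝ F y : ℝ) / ‖Fp‖ ^ 2 with ha
        have hβ' : β = a - t * (s * a ^ 2) / ‖F‖ ^ 2 := by
          rw [hβ, ha]
          field_simp
        rw [hβ', ← sub_nonneg]
        have heq : ‖F‖ ^ 2 / (4 * t) - (a - t * (s * a ^ 2) / ‖F‖ ^ 2) * s =
            (2 * t * (a * s) - ‖F‖ ^ 2) ^ 2 / (4 * t * ‖F‖ ^ 2) := by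
          field_simp
          ring
        rw [heq]
        positivity
      have : βp * s ≤ max (0 * s) (β * s) := by
        rw [hβp, max_mul_of_nonneg _ _ hsgt.le]
      rw [zero_mul] at this
      exact this.trans (max_le hbdpos hβs)
  have hinner : (inner ℝ F d : ℝ) = -(inner ℝ F DF : ℝ) + βp * s := by
    rw [hd, inner_add_right, inner_neg_right, real_inner_smul_right]
  refine ⟨hc, ?_, ?_⟩
  · rw [hinner]
    have : ‖F‖ ^ 2 / (4 * t) = 1 / (4 * t) * ‖F‖ ^ 2 := by ring
    nlinarith
  · intro h0
    rw [hinner, h0, zero_mul, add_zero]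
    nlinarith
end

section
/- Let F, F_prev, y, d_prev ∈ ℝⁿ with ‖F_prev‖ ≥ ε > 0, and suppose |⟨F, y⟩|·‖d_prev‖ < μ·‖F‖ for some μ > 0. Let D be diagonal with entries 1/λ_i, ℓ ≤ λ_i ≤ u, t > 0, β₊ = max{0, ⟨F,y⟩/‖F_prev‖² − t·(⟨F,d_prev⟩/‖F_prev‖⁴)·(⟨F,y⟩/‖F‖)²} and d = −D F + β₊ d_prev. Then ‖d‖ ≤ (√n/ℓ + μ/ε² + t μ²/ε⁴)·‖F‖. -/
set_option maxHeartbeats 1000000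


theorem prp_direction_bound (n : ℕ) (ℓ u t ε μ : ℝ) (hℓ : 0 < ℓ) (hℓu : ℓ ≤ u)
    (ht : 0 < t) (hε : 0 < ε) (hμ : 0 < μ)
    (lam : Fin n → ℝ) (hlow : ∀ i, ℓ ≤ lam i) (hhigh : ∀ i, lam i ≤ u)
    (F Fp y dp DF d : EuclideanSpace ℝ (Fin n)) (hF : F ≠ 0)
    (hFp : ε ≤ ‖Fp‖)
    (hDF : ∀ i, DF i = (lam i)⁻¹ * F i)
    (hsmall : |(inner ℝ (F) (y) : ℝ)| * ‖dp‖ < μ * ‖F‖)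
    (βp : ℝ)
    (hβp : βp = max 0 ((inner ℝ (F) (y) : ℝ) / ‖Fp‖ ^ 2 -
      t * ((inner ℝ (F) (dp) : ℝ) / ‖Fp‖ ^ 4) * ((inner ℝ (F) (y) : ℝ) / ‖F‖) ^ 2))
    (hd : d = -DF + βp • dp) :
    ‖d‖ ≤ (Real.sqrt n / ℓ + μ / ε ^ 2 + t * μ ^ 2 / ε ^ 4) * ‖F‖ := by
  rcases Nat.eq_zero_or_pos n with hn | hn
  · subst hn
    exact absurd (Subsingleton.elim F 0) hF
  have hFpos : 0 < ‖F‖ := norm_pos_iff.mpr hF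
  have hppos : 0 < ‖Fp‖ := lt_of_lt_of_le hε hFp
  set ip : ℝ := inner ℝ F y with hip
  set ipd : ℝ := inner ℝ F dp with hipd
  have hcs : |ipd| ≤ ‖F‖ * ‖dp‖ := abs_real_inner_le_norm F dp
  have has : |ip| * ‖dp‖ ≤ μ * ‖F‖ := le_of_lt hsmall
  have hβ0 : 0 ≤ βp := hβp ▸ le_max_left 0 _
  -- bound on DF
  have hDFle : ‖DF‖ ≤ ℓ⁻¹ * ‖F‖ := by
    rw [EuclideanSpace.norm_eq, EuclideanSpace.norm_eq]
    rw [show ℓ⁻¹ = Real.sqrt (ℓ⁻¹ ^ 2) from (Real.sqrt_sq (by positivity)).symm,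
      ← Real.sqrt_mul (by positivity)]
    apply Real.sqrt_le_sqrt
    rw [Finset.mul_sum]
    apply Finset.sum_le_sum
    intro i _
    rw [hDF i]
    have hlam : 0 < lam i := lt_of_lt_of_le hℓ (hlow i)
    have h1 : (lam i)⁻¹ ≤ ℓ⁻¹ := by
      apply inv_anti₀ hℓ (hlow i)
    have h0 : 0 ≤ (lam i)⁻¹ := by positivity
    have : ‖(lam i)⁻¹ * F i‖ ^ 2 = (lam i)⁻¹ ^ 2 * ‖F i‖ ^ 2 := by
      rw [norm_mul, mul_pow, Real.norm_eq_abs, sq_abs]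
    rw [this]
    have : (lam i)⁻¹ ^ 2 ≤ ℓ⁻¹ ^ 2 := by nlinarith
    nlinarith [sq_nonneg ‖F i‖]
  have hsqrt1 : (1 : ℝ) ≤ Real.sqrt n := by
    rw [show (1:ℝ) = Real.sqrt 1 from Real.sqrt_one.symm]
    exact Real.sqrt_le_sqrt (by exact_mod_cast hn)
  have hDF2 : ℓ⁻¹ * ‖F‖ ≤ Real.sqrt n / ℓ * ‖F‖ := by
    have : ℓ⁻¹ ≤ Real.sqrt n / ℓ := by
      rw [div_eq_mul_inv]
      nlinarith [inv_pos.mpr hℓ]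
    nlinarith
  -- bound on βp
  have hβle : βp ≤ |ip| / ‖Fp‖ ^ 2 + t * (|ipd| / ‖Fp‖ ^ 4) * (|ip| / ‖F‖) ^ 2 := by
    rw [hβp]
    apply max_le (by positivity)
    have habs : |ip / ‖Fp‖ ^ 2| = |ip| / ‖Fp‖ ^ 2 := by
      rw [abs_div, abs_pow, abs_of_nonneg (norm_nonneg Fp)]
    have habs2 : |t * (ipd / ‖Fp‖ ^ 4) * ((ip / ‖F‖) ^ 2)| =
        t * (|ipd| / ‖Fp‖ ^ 4) * (|ip| / ‖F‖) ^ 2 := by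
      rw [abs_mul, abs_mul, abs_of_nonneg ht.le, abs_div, abs_pow, abs_norm,
        abs_pow, abs_div, abs_norm]
    calc ip / ‖Fp‖ ^ 2 - t * (ipd / ‖Fp‖ ^ 4) * (ip / ‖F‖) ^ 2
        ≤ |ip / ‖Fp‖ ^ 2| + |t * (ipd / ‖Fp‖ ^ 4) * ((ip / ‖F‖) ^ 2)| := by
          have a1 := le_abs_self (ip / ‖Fp‖ ^ 2)
          have a2 := neg_le_abs (t * (ipd / ‖Fp‖ ^ 4) * ((ip / ‖F‖) ^ 2))
          linarith
      _ = |ip| / ‖Fp‖ ^ 2 + t * (|ipd| / ‖Fp‖ ^ 4) * (|ip| / ‖F‖) ^ 2 := by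
          rw [habs, habs2]
  -- term bounds
  have hT1 : |ip| / ‖Fp‖ ^ 2 * ‖dp‖ ≤ μ / ε ^ 2 * ‖F‖ := by
    rw [div_mul_eq_mul_div, div_mul_eq_mul_div, div_le_div_iff₀ (by positivity) (by positivity)]
    have hpp : ε ^ 2 ≤ ‖Fp‖ ^ 2 := pow_le_pow_left₀ hε.le hFp 2
    nlinarith [mul_nonneg (abs_nonneg ip) (norm_nonneg dp), mul_nonneg hμ.le hFpos.le]
  have key : |ipd| * |ip| ^ 2 * ‖dp‖ ≤ μ ^ 2 * ‖F‖ ^ 3 := by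
    have k1 : |ipd| * (|ip| ^ 2 * ‖dp‖) ≤ ‖F‖ * ‖dp‖ * (|ip| ^ 2 * ‖dp‖) :=
      mul_le_mul_of_nonneg_right hcs (by positivity)
    have h1 : (|ip| * ‖dp‖) ^ 2 ≤ (μ * ‖F‖) ^ 2 :=
      pow_le_pow_left₀ (by positivity) has 2
    have k2 : ‖F‖ * (|ip| * ‖dp‖) ^ 2 ≤ ‖F‖ * (μ * ‖F‖) ^ 2 :=
      mul_le_mul_of_nonneg_left h1 (norm_nonneg F)
    nlinarith [k1, k2]
  have hT2 : t * (|ipd| / ‖Fp‖ ^ 4) * (|ip| / ‖F‖) ^ 2 * ‖dp‖ ≤ t * μ ^ 2 / ε ^ 4 * ‖F‖ := by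
    have e : t * (|ipd| / ‖Fp‖ ^ 4) * (|ip| / ‖F‖) ^ 2 * ‖dp‖ =
        (t * (|ipd| * |ip| ^ 2 * ‖dp‖)) / (‖Fp‖ ^ 4 * ‖F‖ ^ 2) := by
      field_simp
    rw [e, div_mul_eq_mul_div, div_le_div_iff₀ (by positivity) (by positivity)]
    have hp4 : ε ^ 4 ≤ ‖Fp‖ ^ 4 := pow_le_pow_left₀ hε.le hFp 4
    have k3 : t * (|ipd| * |ip| ^ 2 * ‖dp‖) * ε ^ 4 ≤ t * (μ ^ 2 * ‖F‖ ^ 3) * ε ^ 4 := by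
      have := mul_le_mul_of_nonneg_left key ht.le
      nlinarith [pow_pos hε 4]
    have k4 : t * (μ ^ 2 * ‖F‖ ^ 3) * ε ^ 4 ≤ t * (μ ^ 2 * ‖F‖ ^ 3) * ‖Fp‖ ^ 4 :=
      mul_le_mul_of_nonneg_left hp4 (by positivity)
    nlinarith [k3, k4]
  -- combine
  calc ‖d‖ ≤ ‖DF‖ + βp * ‖dp‖ := by
        rw [hd]
        calc ‖-DF + βp • dp‖ ≤ ‖-DF‖ + ‖βp • dp‖ := norm_add_le _ _
          _ = ‖DF‖ + βp * ‖dp‖ := by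
              rw [norm_neg, norm_smul, Real.norm_eq_abs, abs_of_nonneg hβ0]
    _ ≤ ℓ⁻¹ * ‖F‖ + (|ip| / ‖Fp‖ ^ 2 + t * (|ipd| / ‖Fp‖ ^ 4) * (|ip| / ‖F‖) ^ 2) * ‖dp‖ :=
        add_le_add hDFle (mul_le_mul_of_nonneg_right hβle (norm_nonneg dp))
    _ = ℓ⁻¹ * ‖F‖ + (|ip| / ‖Fp‖ ^ 2 * ‖dp‖ +
        t * (|ipd| / ‖Fp‖ ^ 4) * (|ip| / ‖F‖) ^ 2 * ‖dp‖) := by ring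
    _ ≤ Real.sqrt n / ℓ * ‖F‖ + (μ / ε ^ 2 * ‖F‖ + t * μ ^ 2 / ε ^ 4 * ‖F‖) :=
        add_le_add hDF2 (add_le_add hT1 hT2)
    _ = (Real.sqrt n / ℓ + μ / ε ^ 2 + t * μ ^ 2 / ε ^ 4) * ‖F‖ := by ring
end

section
/- Let F : ℝⁿ → ℝⁿ be continuous, x, d ∈ ℝⁿ with ⟨F(x), d⟩ < 0, and let σ > 0, β > 0, ρ ∈ (0,1). Then there exists m ∈ ℕ such that ⟨F(x + β ρ^m d), d⟩ ≤ −σ β ρ^m ‖F(x + β ρ^m d)‖ ‖d‖². (Well-definedness of the DPPM line search.) -/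
theorem line_search_well_defined (n : ℕ)
    (F : EuclideanSpace ℝ (Fin n) → EuclideanSpace ℝ (Fin n)) (hF : Continuous F)
    (x d : EuclideanSpace ℝ (Fin n)) (hdesc : (inner ℝ (F x) (d) : ℝ) < 0)
    (σ β ρ : ℝ) (hσ : 0 < σ) (hβ : 0 < β) (hρ : ρ ∈ Set.Ioo (0 : ℝ) 1) :
    ∃ m : ℕ, (inner ℝ (F (x + (β * ρ ^ m) • d)) (d) : ℝ) ≤
      -σ * (β * ρ ^ m) * ‖F (x + (β * ρ ^ m) • d)‖ * ‖d‖ ^ 2 := by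
  set t : ℕ → ℝ := fun m => β * ρ ^ m with ht
  have htend : Filter.Tendsto t Filter.atTop (nhds 0) := by
    have := tendsto_pow_atTop_nhds_zero_of_lt_one (le_of_lt hρ.1) hρ.2
    simpa using this.const_mul β
  have hx : Filter.Tendsto (fun m => x + t m • d) Filter.atTop (nhds x) := by
    have : Filter.Tendsto (fun m => t m • d) Filter.atTop (nhds ((0:ℝ) • d)) :=
      htend.smul_const d
    simpa using (tendsto_const_nhds.add this)
  have hg : Filter.Tendsto
      (fun m => (inner ℝ (F (x + t m • d)) d : ℝ)
        + σ * t m * ‖F (x + t m • d)‖ * ‖d‖ ^ 2)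
      Filter.atTop (nhds ((inner ℝ (F x) d : ℝ) + σ * 0 * ‖F x‖ * ‖d‖ ^ 2)) := by
    have hFc : Filter.Tendsto (fun m => F (x + t m • d)) Filter.atTop (nhds (F x)) :=
      (hF.tendsto x).comp hx
    have h1 : Filter.Tendsto (fun m => (inner ℝ (F (x + t m • d)) d : ℝ))
        Filter.atTop (nhds (inner ℝ (F x) d : ℝ)) :=
      ((continuous_inner.comp (Continuous.prodMk continuous_id continuous_const)).tendsto
        (F x)).comp hFc
    have h2 : Filter.Tendsto (fun m => σ * t m * ‖F (x + t m • d)‖ * ‖d‖ ^ 2)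
        Filter.atTop (nhds (σ * 0 * ‖F x‖ * ‖d‖ ^ 2)) :=
      (((htend.const_mul σ).mul (hFc.norm)).mul_const (‖d‖ ^ 2))
    exact h1.add h2
  have hlim : (inner ℝ (F x) d : ℝ) + σ * 0 * ‖F x‖ * ‖d‖ ^ 2 < 0 := by
    simpa using hdesc
  have hev : ∀ᶠ m in Filter.atTop,
      (inner ℝ (F (x + t m • d)) d : ℝ) + σ * t m * ‖F (x + t m • d)‖ * ‖d‖ ^ 2 < 0 :=
    hg.eventually_lt_const hlim
  obtain ⟨m, hm⟩ := hev.exists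
  refine ⟨m, ?_⟩
  simp only [ht] at hm
  linarith
end

section
/- Let F : ℝⁿ → ℝⁿ be monotone, i.e. ⟨F(x) − F(y), x − y⟩ ≥ 0 for all x, y. Suppose x, z ∈ ℝⁿ satisfy ⟨F(z), x − z⟩ > 0 and let x* be any zero of F. Then the hyperplane projection point x⁺ = x − (⟨x − z, F(z)⟩/‖F(z)‖²)·F(z) satisfies ‖x⁺ − x*‖² ≤ ‖x − x*‖² − ‖x⁺ − x‖², in particular ‖x⁺ − x*‖ ≤ ‖x − x*‖. -/
theorem hyperplane_projection_fejer (n : ℕ)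
    (F : EuclideanSpace ℝ (Fin n) → EuclideanSpace ℝ (Fin n))
    (hmono : ∀ x y, 0 ≤ (inner ℝ (F x - F y) (x - y) : ℝ))
    (x z xstar : EuclideanSpace ℝ (Fin n))
    (hFz : F z ≠ 0) (hpos : 0 < (inner ℝ (F z) (x - z) : ℝ)) (hstar : F xstar = 0)
    (xplus : EuclideanSpace ℝ (Fin n))
    (hxplus : xplus = x - ((inner ℝ (x - z) (F z) : ℝ) / ‖F z‖ ^ 2) • F z) :
    ‖xplus - xstar‖ ^ 2 ≤ ‖x - xstar‖ ^ 2 - ‖xplus - x‖ ^ 2 ∧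
      ‖xplus - xstar‖ ≤ ‖x - xstar‖ := by
  set t : ℝ := (inner ℝ (x - z) (F z) : ℝ) / ‖F z‖ ^ 2 with ht
  have hFzn : 0 < ‖F z‖ := norm_pos_iff.mpr hFz
  have hFznorm : (0:ℝ) < ‖F z‖ ^ 2 := by positivity
  have htpos : 0 < t := by
    apply div_pos _ hFznorm
    rwa [real_inner_comm]
  have hmono' : 0 ≤ (inner ℝ (F z) (z - xstar) : ℝ) := by
    have := hmono z xstar
    rwa [hstar, sub_zero] at this
  have hxmx : x - xplus = t • F z := by
    rw [hxplus]; abel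
  have hkey : 0 ≤ (inner ℝ (x - xplus) (xplus - xstar) : ℝ) := by
    rw [hxmx, real_inner_smul_left]
    apply mul_nonneg htpos.le
    have hxx : xplus - xstar = (x - xstar) - t • F z := by rw [hxplus]; abel
    rw [hxx, inner_sub_right, real_inner_smul_right, real_inner_self_eq_norm_sq]
    have htval : t * ‖F z‖ ^ 2 = (inner ℝ (F z) (x - z) : ℝ) := by
      rw [ht, div_mul_cancel₀ _ hFznorm.ne', real_inner_comm]
    rw [htval]
    have : (inner ℝ (F z) (x - xstar) : ℝ) - inner ℝ (F z) (x - z) = inner ℝ (F z) (z - xstar) := by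
      rw [← inner_sub_right]
      congr 1
      abel
    rw [this]
    exact hmono'
  have hpyth : ‖x - xstar‖ ^ 2 = ‖x - xplus‖ ^ 2 + ‖xplus - xstar‖ ^ 2
      + 2 * (inner ℝ (x - xplus) (xplus - xstar) : ℝ) := by
    have hdecomp : x - xstar = (x - xplus) + (xplus - xstar) := by abel
    rw [hdecomp, norm_add_sq_real]
    ring
  have h1 : ‖xplus - xstar‖ ^ 2 ≤ ‖x - xstar‖ ^ 2 - ‖xplus - x‖ ^ 2 := by
    have : ‖xplus - x‖ = ‖x - xplus‖ := norm_sub_rev _ _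
    rw [this, hpyth]
    nlinarith
  refine ⟨h1, ?_⟩
  have h2 : ‖xplus - xstar‖ ^ 2 ≤ ‖x - xstar‖ ^ 2 := by nlinarith [sq_nonneg ‖xplus - x‖]
  nlinarith [norm_nonneg (xplus - xstar), norm_nonneg (x - xstar)]
end

section
/- Under monotonicity of F and ⟨F(z_k), x_k − z_k⟩ ≥ σ α_k² ‖F(z_k)‖·‖d_k‖² (consequence of the line search with z_k = x_k + α_k d_k), the projection step x_{k+1} = P_Ω[x_k − ξ_k F(x_k_half)] with ξ_k = ⟨x_k − z_k, F(z_k)⟩/‖F(z_k)‖² and any solution x* ∈ Ω of F(x*) = 0 satisfies ‖x_{k+1} − x*‖² ≤ ‖x_k − x*‖² − σ² α_k⁴ ‖d_k‖⁴. Consequently the sequence {‖x_k − x*‖} is nonincreasing, {x_k} is bounded, and Σ_k α_k⁴ ‖d_k‖⁴ < ∞, so α_k‖d_k‖ → 0. -/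
open Filter

lemma proj_var_ineq {n : ℕ} {Ω : Set (EuclideanSpace ℝ (Fin n))} (hconv : Convex ℝ Ω)
    {P : EuclideanSpace ℝ (Fin n) → EuclideanSpace ℝ (Fin n)}
    (hP : ∀ v, P v ∈ Ω ∧ ∀ w ∈ Ω, ‖P v - v‖ ≤ ‖w - v‖)
    (v w : EuclideanSpace ℝ (Fin n)) (hw : w ∈ Ω) :
    ‖P v - w‖ ^ 2 ≤ ‖v - w‖ ^ 2 - ‖v - P v‖ ^ 2 := by
  obtain ⟨hPm, hPmin⟩ := hP v
  haveI : Nonempty Ω := ⟨⟨P v, hPm⟩⟩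
  have hinf : ‖v - P v‖ = ⨅ u : Ω, ‖v - u‖ := by
    apply le_antisymm
    · apply le_ciInf
      rintro ⟨u, hu⟩
      rw [norm_sub_rev]
      simpa [norm_sub_rev u v] using hPmin u hu
    · exact ciInf_le ⟨0, fun _ ⟨_, h⟩ => h ▸ norm_nonneg _⟩ (⟨P v, hPm⟩ : Ω)
  have hvar : (inner ℝ (v - P v) (w - P v) : ℝ) ≤ 0 :=
    (norm_eq_iInf_iff_real_inner_le_zero hconv hPm).mp hinf w hw
  have hexp : ‖v - w‖ ^ 2 = ‖v - P v‖ ^ 2 - 2 * (inner ℝ (v - P v) (w - P v) : ℝ)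
      + ‖w - P v‖ ^ 2 := by
    have := norm_sub_sq_real (v - P v) (w - P v)
    have h2 : v - P v - (w - P v) = v - w := by abel
    rw [h2] at this
    linarith [this]
  rw [norm_sub_rev w (P v)] at hexp
  linarith

theorem projection_step_fejer_monotone (n : ℕ) (Ω : Set (EuclideanSpace ℝ (Fin n)))
    (hne : Ω.Nonempty) (hcl : IsClosed Ω) (hconv : Convex ℝ Ω)
    (F : EuclideanSpace ℝ (Fin n) → EuclideanSpace ℝ (Fin n))
    (hFc : Continuous F)
    (hmono : ∀ x y, 0 ≤ (inner ℝ (F x - F y) (x - y) : ℝ))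
    (xstar : EuclideanSpace ℝ (Fin n)) (hxstar : xstar ∈ Ω) (hFstar : F xstar = 0)
    (P : EuclideanSpace ℝ (Fin n) → EuclideanSpace ℝ (Fin n))
    (hP : ∀ v, P v ∈ Ω ∧ ∀ w ∈ Ω, ‖P v - v‖ ≤ ‖w - v‖)
    (x d z : ℕ → EuclideanSpace ℝ (Fin n)) (α : ℕ → ℝ) (σ : ℝ)
    (hσ : σ ∈ Set.Ioo (0 : ℝ) 1)
    (hxΩ : ∀ k, x k ∈ Ω) (hα : ∀ k, 0 < α k)
    (hz : ∀ k, z k = x k + (α k) • d k)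
    (hFz : ∀ k, F (z k) ≠ 0)
    (hls : ∀ k, σ * (α k) ^ 2 * ‖F (z k)‖ * ‖d k‖ ^ 2 ≤ (inner ℝ (F (z k)) (x k - z k) : ℝ))
    (hstep : ∀ k, x (k + 1) =
      P (x k - ((inner ℝ (x k - z k) (F (z k)) : ℝ) / ‖F (z k)‖ ^ 2) • F (z k))) :
    (∀ k, ‖x (k + 1) - xstar‖ ^ 2 ≤
        ‖x k - xstar‖ ^ 2 - σ ^ 2 * (α k) ^ 4 * ‖d k‖ ^ 4) ∧
    (∀ k, ‖x (k + 1) - xstar‖ ≤ ‖x k - xstar‖) ∧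
    Bornology.IsBounded (Set.range x) ∧
    Summable (fun k => (α k) ^ 4 * ‖d k‖ ^ 4) ∧
    Tendsto (fun k => α k * ‖d k‖) atTop (nhds 0) := by
  obtain ⟨hσ0, hσ1⟩ := hσ
  -- main inequality
  have key : ∀ k, ‖x (k + 1) - xstar‖ ^ 2 ≤
      ‖x k - xstar‖ ^ 2 - σ ^ 2 * (α k) ^ 4 * ‖d k‖ ^ 4 := by
    intro k
    set c : ℝ := (inner ℝ (F (z k)) (x k - z k) : ℝ) with hc
    have hFzn : (0 : ℝ) < ‖F (z k)‖ := norm_pos_iff.mpr (hFz k)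
    have hb : (0 : ℝ) ≤ σ * (α k) ^ 2 * ‖F (z k)‖ * ‖d k‖ ^ 2 := by positivity
    have hcpos : 0 ≤ c := le_trans hb (hls k)
    set ξ : ℝ := (inner ℝ (x k - z k) (F (z k)) : ℝ) / ‖F (z k)‖ ^ 2 with hξ
    have hξc : ξ = c / ‖F (z k)‖ ^ 2 := by
      rw [hξ, hc, real_inner_comm]
    set v : EuclideanSpace ℝ (Fin n) := x k - ξ • F (z k) with hv
    -- monotonicity: ⟨F z, z - x*⟩ ≥ 0
    have hmon : 0 ≤ (inner ℝ (F (z k)) (z k - xstar) : ℝ) := by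
      have := hmono (z k) xstar
      rwa [hFstar, sub_zero] at this
    -- ⟨x k - x*, F z⟩ ≥ c
    have hge : c ≤ (inner ℝ (x k - xstar) (F (z k)) : ℝ) := by
      have hsplit : (inner ℝ (x k - xstar) (F (z k)) : ℝ)
          = (inner ℝ (F (z k)) (x k - z k) : ℝ) + (inner ℝ (F (z k)) (z k - xstar) : ℝ) := by
        rw [real_inner_comm]
        rw [← inner_add_right]
        congr 1
        abel
      rw [hsplit]
      linarith
    -- expand ‖v - x*‖²
    have hexp : ‖v - xstar‖ ^ 2 = ‖x k - xstar‖ ^ 2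
        - 2 * ξ * (inner ℝ (x k - xstar) (F (z k)) : ℝ) + ξ ^ 2 * ‖F (z k)‖ ^ 2 := by
      have h1 : v - xstar = (x k - xstar) - ξ • F (z k) := by rw [hv]; abel
      rw [h1, norm_sub_sq_real, real_inner_smul_right, norm_smul]
      simp [Real.norm_eq_abs, mul_pow, sq_abs]
      ring
    have hξnn : 0 ≤ ξ := by
      rw [hξc]; positivity
    have hvle : ‖v - xstar‖ ^ 2 ≤ ‖x k - xstar‖ ^ 2 - c ^ 2 / ‖F (z k)‖ ^ 2 := by
      rw [hexp, hξc]
      have hFz2 : (0:ℝ) < ‖F (z k)‖ ^ 2 := by positivity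
      have h1 : (c / ‖F (z k)‖ ^ 2) ^ 2 * ‖F (z k)‖ ^ 2 = c ^ 2 / ‖F (z k)‖ ^ 2 := by
        field_simp
      rw [h1]
      have h2 : 2 * (c / ‖F (z k)‖ ^ 2) * c = 2 * (c ^ 2 / ‖F (z k)‖ ^ 2) := by
        field_simp
      have h3 : 2 * (c / ‖F (z k)‖ ^ 2) * c ≤
          2 * (c / ‖F (z k)‖ ^ 2) * (inner ℝ (x k - xstar) (F (z k)) : ℝ) := by
        apply mul_le_mul_of_nonneg_left hge
        positivity
      linarith
    have hcsq : σ ^ 2 * (α k) ^ 4 * ‖d k‖ ^ 4 ≤ c ^ 2 / ‖F (z k)‖ ^ 2 := by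
      have hsq : (σ * (α k) ^ 2 * ‖F (z k)‖ * ‖d k‖ ^ 2) ^ 2 ≤ c ^ 2 :=
        pow_le_pow_left₀ hb (hls k) 2
      have : (σ * (α k) ^ 2 * ‖F (z k)‖ * ‖d k‖ ^ 2) ^ 2
          = σ ^ 2 * (α k) ^ 4 * ‖d k‖ ^ 4 * ‖F (z k)‖ ^ 2 := by ring
      rw [this] at hsq
      rw [le_div_iff₀ (by positivity)]
      exact hsq
    have hproj : ‖x (k + 1) - xstar‖ ^ 2 ≤ ‖v - xstar‖ ^ 2 := by
      rw [hstep k]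
      have := proj_var_ineq hconv hP v xstar hxstar
      have hnn : 0 ≤ ‖v - P v‖ ^ 2 := by positivity
      calc ‖P v - xstar‖ ^ 2 ≤ ‖v - xstar‖ ^ 2 - ‖v - P v‖ ^ 2 := this
        _ ≤ ‖v - xstar‖ ^ 2 := by linarith
    linarith
  refine ⟨key, ?_, ?_, ?_, ?_⟩
  · intro k
    have h := key k
    have h2 : ‖x (k+1) - xstar‖ ^ 2 ≤ ‖x k - xstar‖ ^ 2 := by
      have : (0:ℝ) ≤ σ ^ 2 * (α k) ^ 4 * ‖d k‖ ^ 4 := by positivity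
      linarith
    exact (pow_le_pow_iff_left₀ (norm_nonneg _) (norm_nonneg _) two_ne_zero).mp h2
  · -- bounded
    have hmonot : ∀ k, ‖x k - xstar‖ ≤ ‖x 0 - xstar‖ := by
      intro k
      induction k with
      | zero => exact le_rfl
      | succ k ih =>
        have h := key k
        have h2 : ‖x (k+1) - xstar‖ ^ 2 ≤ ‖x k - xstar‖ ^ 2 := by
          have : (0:ℝ) ≤ σ ^ 2 * (α k) ^ 4 * ‖d k‖ ^ 4 := by positivity
          linarith
        have := (pow_le_pow_iff_left₀ (norm_nonneg _) (norm_nonneg _) two_ne_zero).mp h2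
        exact le_trans this ih
    apply Bornology.IsBounded.subset (Metric.isBounded_closedBall
      (x := xstar) (r := ‖x 0 - xstar‖))
    rintro _ ⟨k, rfl⟩
    simp [Metric.mem_closedBall, dist_eq_norm]
    exact hmonot k
  · -- summable
    have hsum : ∀ m, σ ^ 2 * ∑ i ∈ Finset.range m, (α i) ^ 4 * ‖d i‖ ^ 4
        ≤ ‖x 0 - xstar‖ ^ 2 - ‖x m - xstar‖ ^ 2 := by
      intro m
      induction m with
      | zero => simp
      | succ m ih =>
        rw [Finset.sum_range_succ]
        have h := key m
        nlinarith [h, ih]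
    apply summable_of_sum_range_le (c := ‖x 0 - xstar‖ ^ 2 / σ ^ 2)
    · intro k; positivity
    · intro m
      have h := hsum m
      rw [le_div_iff₀ (by positivity)]
      nlinarith [sq_nonneg ‖x m - xstar‖, h]
  · -- tendsto
    have hsum : Summable (fun k => (α k) ^ 4 * ‖d k‖ ^ 4) := by
      have hsum : ∀ m, σ ^ 2 * ∑ i ∈ Finset.range m, (α i) ^ 4 * ‖d i‖ ^ 4
          ≤ ‖x 0 - xstar‖ ^ 2 - ‖x m - xstar‖ ^ 2 := by
        intro m
        induction m with
        | zero => simp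
        | succ m ih =>
          rw [Finset.sum_range_succ]
          have h := key m
          nlinarith [h, ih]
      apply summable_of_sum_range_le (c := ‖x 0 - xstar‖ ^ 2 / σ ^ 2)
      · intro k; positivity
      · intro m
        have h := hsum m
        rw [le_div_iff₀ (by positivity)]
        nlinarith [sq_nonneg ‖x m - xstar‖, h]
    set g : ℕ → ℝ := fun k => α k * ‖d k‖ with hg
    have hgnn : ∀ k, 0 ≤ g k := fun k => mul_nonneg (hα k).le (norm_nonneg _)
    have h4 : Tendsto (fun k => (g k) ^ 4) atTop (nhds 0) := by
      have := hsum.tendsto_atTop_zero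
      convert this using 2 with k
      simp [hg, mul_pow]
    have h2 : Tendsto (fun k => (g k) ^ 2) atTop (nhds 0) := by
      have heq : ∀ k, Real.sqrt ((g k) ^ 4) = (g k) ^ 2 := fun k => by
        rw [show (g k) ^ 4 = ((g k) ^ 2) ^ 2 by ring, Real.sqrt_sq (sq_nonneg _)]
      simpa only [heq, Real.sqrt_zero] using h4.sqrt
    have h1 : Tendsto g atTop (nhds 0) := by
      have heq : ∀ k, Real.sqrt ((g k) ^ 2) = g k := fun k => Real.sqrt_sq (hgnn k)
      simpa only [heq, Real.sqrt_zero] using h2.sqrt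
    exact h1
end

section
/- Let F : ℝⁿ → ℝⁿ be continuous and let (x_k), (d_k) be bounded sequences with x_k → x̃, d_k → d̃ (along a subsequence), α_k → 0, and suppose for each k the line-search failure inequality ⟨F(x_k + (α_k/ρ) d_k), d_k⟩ > −σ (α_k/ρ) ‖F(x_k + (α_k/ρ) d_k)‖ ‖d_k‖² holds, where ρ, σ ∈ (0,1). Then ⟨F(x̃), d̃⟩ ≥ 0. -/
open Filter

theorem line_search_failure_limit (n : ℕ)
    (F : EuclideanSpace ℝ (Fin n) → EuclideanSpace ℝ (Fin n)) (hF : Continuous F)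
    (x d : ℕ → EuclideanSpace ℝ (Fin n)) (α : ℕ → ℝ)
    (xt dt : EuclideanSpace ℝ (Fin n)) (ρ σ : ℝ)
    (hρ : ρ ∈ Set.Ioo (0 : ℝ) 1) (hσ : σ ∈ Set.Ioo (0 : ℝ) 1)
    (hx : Tendsto x atTop (nhds xt)) (hd : Tendsto d atTop (nhds dt))
    (hα : Tendsto α atTop (nhds 0))
    (hfail : ∀ k, (inner ℝ (F (x k + (α k / ρ) • d k)) (d k) : ℝ) >
      -σ * (α k / ρ) * ‖F (x k + (α k / ρ) • d k)‖ * ‖d k‖ ^ 2) :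
    0 ≤ (inner ℝ (F xt) (dt) : ℝ) := by
  have hαρ : Tendsto (fun k => α k / ρ) atTop (nhds 0) := by
    simpa using hα.div_const ρ
  have hy : Tendsto (fun k => x k + (α k / ρ) • d k) atTop (nhds xt) := by
    have : Tendsto (fun k => (α k / ρ) • d k) atTop (nhds ((0:ℝ) • dt)) :=
      hαρ.smul hd
    simpa using hx.add this
  have hFy : Tendsto (fun k => F (x k + (α k / ρ) • d k)) atTop (nhds (F xt)) :=
    (hF.tendsto xt).comp hy
  have hlhs : Tendsto (fun k => (inner ℝ (F (x k + (α k / ρ) • d k)) (d k) : ℝ))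
      atTop (nhds (inner ℝ (F xt) dt : ℝ)) :=
    hFy.inner hd
  have hrhs : Tendsto (fun k => -σ * (α k / ρ) * ‖F (x k + (α k / ρ) • d k)‖ * ‖d k‖ ^ 2)
      atTop (nhds 0) := by
    have := (((tendsto_const_nhds (x := (-σ))).mul hαρ).mul (hFy.norm)).mul
      ((hd.norm).pow 2)
    simpa using this
  exact le_of_tendsto_of_tendsto' hrhs hlhs (fun k => (hfail k).le)
end
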